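/- Let P be a regular partition of K_{m_1(n_1),m_2(n_2)} such that τ(P) is asymmetric, and let S be the set of degree-1 vertices of some edge of τ'(P). Then |S| ≤ 2^{m_2}, and, writing |S| = Σ_{i=0}^{j'} C(m_2,i) + k' with j' ≥ -1 and either 0 ≤ k' < C(m_2,j'+1), or k' = 0 and j' = m_2, one has w(S) ≤ Σ_{i=0}^{j'} (m_2-i)·C(m_2,i) + k'·(m_2-j'-1). -/

import Mathlib

/-- Vertex type of the complete multipartite graph with `m1` parts of size `n1`
and `m2` parts of size `n2`.  The parts of size `n2` are indexed by `Fin m2`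
(these play the role of `X_1, …, X_{m2}` in the paper). -/
abbrev MPV (m1 n1 m2 n2 : ℕ) : Type :=
  (Fin m1 × Fin n1) ⊕ (Fin m2 × Fin n2)

/-- The part (maximal independent set) containing a vertex. -/
def partOf {m1 n1 m2 n2 : ℕ} (v : MPV m1 n1 m2 n2) : Fin m1 ⊕ Fin m2 :=
  Sum.map Prod.fst Prod.fst v

/-- The complete multipartite graph `K_{m1(n1), m2(n2)}`. -/
def KMP (m1 n1 m2 n2 : ℕ) : SimpleGraph (MPV m1 n1 m2 n2) :=
  SimpleGraph.comap partOf ⊤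

/-- `P` is a regular partition: a partition of the vertex set each of whose parts
meets each maximal independent set in at most one vertex. -/
def IsRegularPartition {m1 n1 m2 n2 : ℕ} (P : Set (Set (MPV m1 n1 m2 n2))) : Prop :=
  Setoid.IsPartition P ∧
    ∀ p ∈ P, ∀ i : Fin m1 ⊕ Fin m2, {v | v ∈ p ∧ partOf v = i}.Subsingleton

/-- The incidence relation of the hypergraph `τ(P)`: its vertices are the parts of `P`,
its edges are the maximal independent sets, and a part is incident to a maximal
independent set iff they intersect (for a regular partition, iff they intersect in
exactly one vertex). -/
def tauInc {m1 n1 m2 n2 : ℕ} (P : Set (Set (MPV m1 n1 m2 n2))) :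
    ↥P → (Fin m1 ⊕ Fin m2) → Prop :=
  fun p i => ∃ v ∈ p.1, partOf v = i

/-- A hypergraph, given by its incidence relation, is asymmetric: its only
automorphism (pair of permutations of vertices and edges preserving incidence)
is the identity. -/
def HypAsymmetric {Vh Eh : Type*} (I : Vh → Eh → Prop) : Prop :=
  ∀ (σ : Equiv.Perm Vh) (τ : Equiv.Perm Eh),
    (∀ v e, I v e ↔ I (σ v) (τ e)) → σ = 1 ∧ τ = 1

variable {m1 n1 m2 n2 : ℕ}

/-- Incidence of the hypergraph `τ'(P)`: only the `m1` edges of size `n1` are kept. -/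
def tauInc' (P : Set (Set (MPV m1 n1 m2 n2))) (p : ↥P) (j : Fin m1) : Prop :=
  tauInc P p (Sum.inl j)

/-- The label of a vertex of `τ'(P)`: the set of indices `i ≤ m2` with the vertex
incident to the `n2`-edge `X_i`. -/
def labelOf (P : Set (Set (MPV m1 n1 m2 n2))) (p : ↥P) : Set (Fin m2) :=
  {i | tauInc P p (Sum.inr i)}

/-- The weight of a vertex of `τ'(P)`: the cardinality of its label. -/
noncomputable def wtv (P : Set (Set (MPV m1 n1 m2 n2))) (p : ↥P) : ℕ :=
  (labelOf P p).ncard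

/-- The degree of a vertex in `τ'(P)`. -/
noncomputable def degE (P : Set (Set (MPV m1 n1 m2 n2))) (p : ↥P) : ℕ :=
  {j : Fin m1 | tauInc' P p j}.ncard

/-- The incidence (bipartite) graph of `τ'(P)`, used to speak about its connected
components. -/
def incTG (P : Set (Set (MPV m1 n1 m2 n2))) : SimpleGraph (↥P ⊕ Fin m1) :=
  SimpleGraph.fromRel (fun a b => ∃ p j, a = Sum.inl p ∧ b = Sum.inr j ∧ tauInc' P p j)

/-- The vertex set of a connected component of `τ'(P)`. -/
def compV (P : Set (Set (MPV m1 n1 m2 n2))) (c : (incTG P).ConnectedComponent) :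
    Set ↥P :=
  {p | (incTG P).connectedComponentMk (Sum.inl p) = c}

/-- The edge set of a connected component of `τ'(P)`. -/
def compE (P : Set (Set (MPV m1 n1 m2 n2))) (c : (incTG P).ConnectedComponent) :
    Set (Fin m1) :=
  {j | (incTG P).connectedComponentMk (Sum.inr j) = c}

/-- The weight `w(G)` of a connected component `G` of `τ'(P)`. -/
noncomputable def wComp (P : Set (Set (MPV m1 n1 m2 n2)))
    (c : (incTG P).ConnectedComponent) : ℕ :=
  ∑ᶠ p ∈ compV P c, wtv P p

/-- `μ(G) = Σ_{v : deg v > 2} (deg v - 2)` for a component `G` of `τ'(P)`. -/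
noncomputable def muComp (P : Set (Set (MPV m1 n1 m2 n2)))
    (c : (incTG P).ConnectedComponent) : ℕ :=
  ∑ᶠ p ∈ compV P c, (degE P p - 2)

/-- `deg_1(e)`: the number of degree-1 vertices of the edge `e` of `τ'(P)`. -/
noncomputable def deg1E (P : Set (Set (MPV m1 n1 m2 n2))) (e : Fin m1) : ℕ :=
  {p | tauInc' P p e ∧ degE P p = 1}.ncard

/-- The total weight of the degree-1 vertices of the edge `e` of `τ'(P)`. -/
noncomputable def wSE (P : Set (Set (MPV m1 n1 m2 n2))) (e : Fin m1) : ℕ :=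
  ∑ᶠ p ∈ {p | tauInc' P p e ∧ degE P p = 1}, wtv P p

/-- `Σ_{i=0}^{t-1} C(m,i)`. -/
def binPartial (m t : ℕ) : ℕ :=
  ∑ i ∈ Finset.range t, Nat.choose m i

/-- The largest `t` (with `t = j' + 1` in the notation of the paper) such that
`Σ_{i=0}^{t-1} C(m,i) ≤ y`. -/
def wBt (m y : ℕ) : ℕ :=
  Nat.findGreatest (fun t => binPartial m t ≤ y) (m + 1)

/-- The quantity `w_y`: writing `y = Σ_{i=0}^{j'} C(m,i) + k'` with `j' ≥ -1` and either
`0 ≤ k' < C(m,j'+1)`, or `k' = 0` and `j' = m`, define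
`w_y = Σ_{i=0}^{j'} (m-i)·C(m,i) + k'(m-j'-1)`. -/
def wB (m y : ℕ) : ℕ :=
  (∑ i ∈ Finset.range (wBt m y), (m - i) * Nat.choose m i)
    + (y - binPartial m (wBt m y)) * (m - wBt m y)

/-- The number of defects `d(G)` of a component `G` of `τ'(P)`, counted with
multiplicity: each vertex `v` of degree at least `2` contributes `m2 - w(v)`, and
each edge `e` contributes `w_{deg_1 e}` minus the weight of its degree-1 vertices. -/
noncomputable def dComp (P : Set (Set (MPV m1 n1 m2 n2)))
    (c : (incTG P).ConnectedComponent) : ℕ :=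
  (∑ᶠ p ∈ {p ∈ compV P c | 2 ≤ degE P p}, (m2 - wtv P p))
    + ∑ᶠ e ∈ compE P c, (wB m2 (deg1E P e) - wSE P e)

/-- **Lemma 4.2.** If `τ(P)` is asymmetric and `S` is the set of degree-1 vertices of an
edge of `τ'(P)`, then `|S| ≤ 2^{m2}`, and writing `|S| = Σ_{i=0}^{j'} C(m2,i) + k'`
(with `t = j' + 1`, so `j' ≥ -1` corresponds to `t ≥ 0`) where either
`0 ≤ k' < C(m2,j'+1)` or `k' = 0 ∧ j' = m2`, one has
`w(S) ≤ Σ_{i=0}^{j'} (m2-i)·C(m2,i) + k'(m2-j'-1)`. -/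
lemma card_filter_card_lt (m s : ℕ) :
    (Finset.univ.filter (fun B : Finset (Fin m) => B.card < s)).card = binPartial m s := by
  induction s with
  | zero => simp [binPartial]
  | succ s ih =>
    have hsplit : (Finset.univ.filter (fun B : Finset (Fin m) => B.card < s + 1))
        = (Finset.univ.filter (fun B : Finset (Fin m) => B.card < s)) ∪
          (Finset.univ.filter (fun B : Finset (Fin m) => B.card = s)) := by
      ext B; simp; omega
    have hdisj : Disjoint (Finset.univ.filter (fun B : Finset (Fin m) => B.card < s))
        (Finset.univ.filter (fun B : Finset (Fin m) => B.card = s)) := by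
      rw [Finset.disjoint_left]; intro B hB hB'
      simp at hB hB'; omega
    have hpc : (Finset.univ.filter (fun B : Finset (Fin m) => B.card = s))
        = Finset.powersetCard s Finset.univ := by
      ext B; simp [Finset.mem_powersetCard_univ]
    rw [hsplit, Finset.card_union_of_disjoint hdisj, ih, hpc, Finset.card_powersetCard]
    simp [binPartial, Finset.sum_range_succ]

lemma filter_card_gt_le (m j : ℕ) (hj : j < m) (F : Finset (Finset (Fin m))) :
    (F.filter (fun A => j < A.card)).card ≤ binPartial m (m - j) := by
  rw [← card_filter_card_lt m (m - j)]
  apply Finset.card_le_card_of_injOn (fun A => Aᶜ)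
  · intro A hA
    obtain ⟨-, hcard⟩ := Finset.mem_filter.mp hA
    simp only [Finset.mem_coe, Finset.mem_filter, Finset.mem_univ, true_and]
    rw [Finset.card_compl, Fintype.card_fin]
    have : A.card ≤ m := by simpa using Finset.card_le_univ A
    omega
  · intro a _ b _ h; exact compl_injective h

lemma sumBin (m t : ℕ) :
    ∑ s ∈ Finset.range t, binPartial m (s + 1)
      = ∑ i ∈ Finset.range t, (t - i) * Nat.choose m i := by
  induction t with
  | zero => simp
  | succ t ih =>
    rw [Finset.sum_range_succ, ih,
      Finset.sum_range_succ (f := fun i => (t + 1 - i) * Nat.choose m i)]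
    have hb : binPartial m (t + 1)
        = (∑ i ∈ Finset.range t, Nat.choose m i) + Nat.choose m t := by
      simp [binPartial, Finset.sum_range_succ]
    have h2 : ∑ i ∈ Finset.range t, (t + 1 - i) * Nat.choose m i
        = (∑ i ∈ Finset.range t, (t - i) * Nat.choose m i)
          + ∑ i ∈ Finset.range t, Nat.choose m i := by
      rw [← Finset.sum_add_distrib]
      refine Finset.sum_congr rfl fun i hi => ?_
      have := Finset.mem_range.mp hi
      have h3 : t + 1 - i = (t - i) + 1 := by omega
      rw [h3, add_mul, one_mul]
    rw [hb, h2]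
    have h4 : t + 1 - t = 1 := by omega
    rw [h4, one_mul]
    ring

lemma sum_card_le_core (m t : ℕ) (ht : t ≤ m) (F : Finset (Finset (Fin m))) :
    ∑ A ∈ F, A.card
      ≤ (m - t) * F.card + ∑ i ∈ Finset.range t, (t - i) * Nat.choose m i := by
  classical
  have h1 : ∑ A ∈ F, A.card
      = ∑ j ∈ Finset.range m, (F.filter (fun A => j < A.card)).card := by
    have hA : ∀ A ∈ F, A.card = ∑ j ∈ Finset.range m, (if j < A.card then 1 else 0) := by
      intro A _
      have hAm : A.card ≤ m := by simpa using Finset.card_le_univ A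
      have hfil : (Finset.range m).filter (fun j => j < A.card) = Finset.range A.card := by
        ext j; simp only [Finset.mem_filter, Finset.mem_range]; omega
      simp only [Finset.sum_boole, hfil, Finset.card_range, Nat.cast_id]
    rw [Finset.sum_congr rfl hA, Finset.sum_comm]
    refine Finset.sum_congr rfl fun j _ => ?_
    simp [Finset.sum_boole]
  have hsplit : ∑ j ∈ Finset.range m, (F.filter (fun A => j < A.card)).card
      = (∑ j ∈ Finset.Ico 0 (m - t), (F.filter (fun A => j < A.card)).card)
        + ∑ j ∈ Finset.Ico (m - t) m, (F.filter (fun A => j < A.card)).card := by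
    rw [Finset.range_eq_Ico]
    exact (Finset.sum_Ico_consecutive _ (Nat.zero_le (m - t)) (Nat.sub_le m t)).symm
  rw [h1, hsplit]
  have hAle : ∑ j ∈ Finset.Ico 0 (m - t), (F.filter (fun A => j < A.card)).card
      ≤ (m - t) * F.card := by
    calc ∑ j ∈ Finset.Ico 0 (m - t), (F.filter (fun A => j < A.card)).card
        ≤ ∑ _j ∈ Finset.Ico 0 (m - t), F.card :=
          Finset.sum_le_sum fun j _ => Finset.card_filter_le F _
      _ = (m - t) * F.card := by simp [Finset.sum_const, mul_comm]
  have hBle : ∑ j ∈ Finset.Ico (m - t) m, (F.filter (fun A => j < A.card)).card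
      ≤ ∑ i ∈ Finset.range t, (t - i) * Nat.choose m i := by
    calc ∑ j ∈ Finset.Ico (m - t) m, (F.filter (fun A => j < A.card)).card
        ≤ ∑ j ∈ Finset.Ico (m - t) m, binPartial m (m - j) := by
          refine Finset.sum_le_sum fun j hj => ?_
          exact filter_card_gt_le m j (Finset.mem_Ico.mp hj).2 F
      _ = ∑ k ∈ Finset.range (m - (m - t)), binPartial m (m - ((m - t) + k)) :=
          Finset.sum_Ico_eq_sum_range _ _ _
      _ = ∑ k ∈ Finset.range t, binPartial m (t - k) := by
          rw [show m - (m - t) = t from by omega]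
          refine Finset.sum_congr rfl fun k hk => ?_
          have := Finset.mem_range.mp hk
          congr 1; omega
      _ = ∑ k ∈ Finset.range t, binPartial m (k + 1) := by
          rw [← Finset.sum_range_reflect (fun k => binPartial m (k + 1)) t]
          refine Finset.sum_congr rfl fun k hk => ?_
          have := Finset.mem_range.mp hk
          congr 1; omega
      _ = ∑ i ∈ Finset.range t, (t - i) * Nat.choose m i := sumBin m t
  exact add_le_add hAle hBle


lemma deg_one_edges {m1 n1 m2 n2 : ℕ} {P : Set (Set (MPV m1 n1 m2 n2))} {p : ↥P}
    {e : Fin m1} (he : tauInc' P p e) (hd : degE P p = 1) :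
    {j : Fin m1 | tauInc' P p j} = {e} := by
  obtain ⟨a, ha⟩ := Set.ncard_eq_one.mp hd
  have hmem : e ∈ {j : Fin m1 | tauInc' P p j} := he
  rw [ha] at hmem ⊢
  rw [Set.mem_singleton_iff] at hmem
  rw [hmem]

lemma label_injOn {m1 n1 m2 n2 : ℕ} (P : Set (Set (MPV m1 n1 m2 n2)))
    (hasym : HypAsymmetric (tauInc P)) (e : Fin m1) :
    Set.InjOn (labelOf P) {p | tauInc' P p e ∧ degE P p = 1} := by
  classical
  intro p hp q hq hlab
  by_contra hne
  have hkey : ∀ i, tauInc P p i ↔ tauInc P q i := by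
    intro i
    cases i with
    | inl j =>
      have h1 := deg_one_edges hp.1 hp.2
      have h2 := deg_one_edges hq.1 hq.2
      have h3 : {j : Fin m1 | tauInc' P p j} = {j | tauInc' P q j} := h1.trans h2.symm
      exact Set.ext_iff.mp h3 j
    | inr i => exact Set.ext_iff.mp hlab i
  have haut := hasym (Equiv.swap p q) 1 ?_
  · have h := haut.1
    have : Equiv.swap p q p = q := Equiv.swap_apply_left p q
    rw [h] at this
    exact hne this
  · intro v i
    simp only [Equiv.Perm.coe_one, id_eq]
    rcases eq_or_ne v p with rfl | hvp
    · rw [Equiv.swap_apply_left]; exact hkey i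
    rcases eq_or_ne v q with rfl | hvq
    · rw [Equiv.swap_apply_right]; exact (hkey i).symm
    · rw [Equiv.swap_apply_of_ne_of_ne hvp hvq]

theorem weight_degree_one_vertices_of_edge
    (m1 n1 m2 n2 : ℕ) (P : Set (Set (MPV m1 n1 m2 n2)))
    (hreg : IsRegularPartition P) (hasym : HypAsymmetric (tauInc P))
    (e : Fin m1) (S : Set ↥P)
    (hS : S = {p | tauInc' P p e ∧ degE P p = 1}) :
    S.ncard ≤ 2 ^ m2 ∧
    ∀ t k' : ℕ,
      S.ncard = (∑ i ∈ Finset.range t, Nat.choose m2 i) + k' →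
      (k' < Nat.choose m2 t ∨ (k' = 0 ∧ t = m2 + 1)) →
      (∑ᶠ p ∈ S, wtv P p)
        ≤ (∑ i ∈ Finset.range t, (m2 - i) * Nat.choose m2 i) + k' * (m2 - t) := by
  classical
  subst hS
  set S := {p : ↥P | tauInc' P p e ∧ degE P p = 1} with hSdef
  have hinj : Set.InjOn (labelOf P) S := label_injOn P hasym e
  set f : ↥P → Finset (Fin m2) := fun p => (Set.toFinite (labelOf P p)).toFinset with hf
  have hfinj : Set.InjOn f S := by
    intro p hp q hq h
    exact hinj hp hq (by rwa [Set.Finite.toFinset_inj] at h)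
  have hSfin : S.Finite :=
    Set.Finite.of_finite_image (Set.toFinite (f '' S)) hfinj
  set T := hSfin.toFinset with hT
  have hTS : ↑T = S := hSfin.coe_toFinset
  have hTinj : ∀ x ∈ T, ∀ y ∈ T, f x = f y → x = y := by
    intro x hx y hy hxy
    rw [hT, Set.Finite.mem_toFinset] at hx hy
    exact hfinj hx hy hxy
  set F := T.image f with hF
  have hcard : F.card = T.card := Finset.card_image_of_injOn (by
    intro x hx y hy hxy
    exact hTinj x (by exact_mod_cast hx) y (by exact_mod_cast hy) hxy)
  have hScard : S.ncard = T.card := Set.ncard_eq_toFinset_card S hSfin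
  have hwt : ∀ p, wtv P p = (f p).card := fun p =>
    Set.ncard_eq_toFinset_card _ (Set.toFinite (labelOf P p))
  have hsumS : ∑ᶠ p ∈ S, wtv P p = ∑ A ∈ F, A.card := by
    rw [← hTS, finsum_mem_coe_finset, hF, Finset.sum_image hTinj]
    exact Finset.sum_congr rfl fun p _ => hwt p
  constructor
  · rw [hScard, ← hcard]
    calc F.card ≤ Finset.univ.card := Finset.card_le_univ F
      _ = 2 ^ m2 := by rw [Finset.card_univ, Fintype.card_finset, Fintype.card_fin]
  · intro t k' hy hk
    rw [hsumS]
    have hyF : F.card = (∑ i ∈ Finset.range t, Nat.choose m2 i) + k' := by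
      rw [hcard, ← hScard]; exact hy
    rcases hk with hk | ⟨hk0, ht⟩
    · have ht : t ≤ m2 := by
        by_contra h
        rw [Nat.choose_eq_zero_of_lt (by omega)] at hk
        omega
      calc ∑ A ∈ F, A.card
          ≤ (m2 - t) * F.card + ∑ i ∈ Finset.range t, (t - i) * Nat.choose m2 i :=
            sum_card_le_core m2 t ht F
        _ = (∑ i ∈ Finset.range t, (m2 - i) * Nat.choose m2 i) + k' * (m2 - t) := by
            rw [hyF, mul_add, Finset.mul_sum, add_right_comm, mul_comm (m2 - t) k']
            congr 1
            rw [← Finset.sum_add_distrib]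
            refine Finset.sum_congr rfl fun i hi => ?_
            have := Finset.mem_range.mp hi
            rw [← add_mul]
            congr 1
            omega
    · subst hk0 ht
      calc ∑ A ∈ F, A.card
          ≤ (m2 - m2) * F.card + ∑ i ∈ Finset.range m2, (m2 - i) * Nat.choose m2 i :=
            sum_card_le_core m2 m2 le_rfl F
        _ = ∑ i ∈ Finset.range m2, (m2 - i) * Nat.choose m2 i := by
            rw [Nat.sub_self, zero_mul, zero_add]
        _ ≤ (∑ i ∈ Finset.range (m2 + 1), (m2 - i) * Nat.choose m2 i)
              + 0 * (m2 - (m2 + 1)) := by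
            rw [Finset.sum_range_succ, Nat.sub_self, zero_mul, add_zero, zero_mul, add_zero]
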